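/- Let H be a set of functions X → Bool such that the constant-false function belongs to H and no 2-element subset of X is shattered by H (VC dimension at most 1). Let c* ∈ H and let y₁, …, y_t ∈ I(c*) = {x : c* x = true}. Then there is a permutation π of {1,…,t} such that y_{π(1)} ⪯_H y_{π(2)} ⪯_H … ⪯_H y_{π(t)}; in particular any two of the points y₁,…,y_t are comparable under ⪯_H. -/

import Mathlib

/-- `A` is shattered by the concept class `H`. -/
def Shatters {X : Type*} (H : Set (X → Bool)) (A : Finset X) : Prop :=
  ∀ B ⊆ A, ∃ c ∈ H, (∀ x ∈ B, c x = true) ∧ (∀ x ∈ A, x ∉ B → c x = false)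

/-- The partial order induced by a concept class `H`. -/
def Prec {X : Type*} (H : Set (X → Bool)) (x₁ x₂ : X) : Prop :=
  ∀ c ∈ H, c x₁ = true → c x₂ = true

theorem prec_total {X : Type*} (H : Set (X → Bool))
    (hfalse : (fun _ => false) ∈ H)
    (hVC : ∀ A : Finset X, A.card = 2 → ¬ Shatters H A)
    (cstar : X → Bool) (hcstar : cstar ∈ H)
    (a b : X) (ha : cstar a = true) (hb : cstar b = true) :
    Prec H a b ∨ Prec H b a := by
  by_contra hcon
  push_neg at hcon
  obtain ⟨h1, h2⟩ := hcon
  simp only [Prec, not_forall] at h1 h2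
  obtain ⟨c1, hc1H, hc1a, hc1b⟩ := h1
  obtain ⟨c2, hc2H, hc2b, hc2a⟩ := h2
  have hab : a ≠ b := by
    rintro rfl; exact hc1b hc1a
  classical
  apply hVC {a, b} (by simp [hab])
  intro B hB
  have hmem : ∀ x ∈ B, x = a ∨ x = b := by
    intro x hx
    have := hB hx
    simpa using this
  by_cases haB : a ∈ B <;> by_cases hbB : b ∈ B
  · exact ⟨cstar, hcstar, fun x hx => by rcases hmem x hx with rfl | rfl <;> assumption,
      fun x hx hxB => by rcases Finset.mem_insert.mp hx with rfl | hx' <;>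
        simp_all⟩
  · refine ⟨c1, hc1H, fun x hx => ?_, fun x hx hxB => ?_⟩
    · rcases hmem x hx with rfl | rfl
      · exact hc1a
      · exact absurd hx hbB
    · rcases Finset.mem_insert.mp hx with rfl | hx'
      · exact absurd haB hxB
      · rcases Finset.mem_singleton.mp hx' with rfl
        simpa using hc1b
  · refine ⟨c2, hc2H, fun x hx => ?_, fun x hx hxB => ?_⟩
    · rcases hmem x hx with rfl | rfl
      · exact absurd hx haB
      · exact hc2b
    · rcases Finset.mem_insert.mp hx with rfl | hx'
      · simpa using hc2a
      · rcases Finset.mem_singleton.mp hx' with rfl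
        exact absurd hbB hxB
  · exact ⟨(fun _ => false), hfalse, fun x hx => absurd (hmem x hx)
      (by rintro (rfl | rfl) <;> [exact absurd hx haB; exact absurd hx hbB]),
      fun x _ _ => rfl⟩

/-- For a VC-dimension-1 class containing the constant-false function, finitely
many points of `I(c*)` can be sorted into a `⪯_H`-ascending order. -/
theorem exists_sorting_perm {X : Type*} (H : Set (X → Bool))
    (hfalse : (fun _ => false) ∈ H)
    (hVC : ∀ A : Finset X, A.card = 2 → ¬ Shatters H A)
    (cstar : X → Bool) (hcstar : cstar ∈ H)
    (t : ℕ) (y : Fin t → X) (hy : ∀ i, cstar (y i) = true) :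
    ∃ π : Equiv.Perm (Fin t),
      ∀ i j : Fin t, i ≤ j → Prec H (y (π i)) (y (π j)) := by
  classical
  set r : Fin t → Fin t → Prop := fun i j => Prec H (y i) (y j) with hr
  have htot : Total r := fun i j => prec_total H hfalse hVC cstar hcstar _ _ (hy i) (hy j)
  have htrans : Transitive r := fun i j k hij hjk c hc hci => hjk c hc (hij c hc hci)
  haveI : IsTotal (Fin t) r := ⟨htot⟩
  haveI : IsTrans (Fin t) r := ⟨fun _ _ _ hab hbc => htrans hab hbc⟩
  haveI : DecidableRel r := fun _ _ => Classical.dec _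
  set l : List (Fin t) := (List.finRange t).insertionSort r with hl
  have hperm : l.Perm (List.finRange t) := List.perm_insertionSort r _
  have hnodup : l.Nodup := hperm.nodup_iff.mpr (List.nodup_finRange t)
  have hlen : l.length = t := by simpa using hperm.length_eq
  have hsorted : l.Pairwise r := List.pairwise_insertionSort r _
  let f : Fin t → Fin t := fun i => l.get (Fin.cast hlen.symm i)
  have hinj : Function.Injective f := by
    intro i j hij
    have := (List.nodup_iff_injective_get.mp hnodup) hij
    exact Fin.cast_injective hlen.symm (by simpa using this)
  obtain ⟨π, hπ⟩ : ∃ π : Equiv.Perm (Fin t), ∀ i, π i = f i :=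
    ⟨Equiv.ofBijective f ((Finite.injective_iff_bijective).mp hinj), fun i => rfl⟩
  refine ⟨π, fun i j hij => ?_⟩
  rw [hπ i, hπ j]
  rcases eq_or_lt_of_le hij with rfl | hlt
  · exact fun c hc hci => hci
  · exact hsorted.rel_get_of_lt (by simpa using hlt)
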